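/- Let k, ℓ, m, n be nonnegative integers with k + ℓ = m + n. Then the limit as ε → 0⁺ of the integral over [ε, 2π−ε] of (1 − e^{ikz})(1 − e^{iℓz})(1 − e^{−imz})(1 − e^{−inz})/(1 − cos z) dz equals 2π(k + ℓ + m + n − |k−m| − |k−n| − |ℓ−m| − |ℓ−n|). -/

import Mathlib

open Complex Filter intervalIntegral Finset

/-- basic exponential -/
noncomputable def EE (c : ℤ) (z : ℝ) : ℂ := Complex.exp (Complex.I * c * z)

lemma contEE (c : ℤ) : Continuous (EE c) := by
  unfold EE; fun_prop

lemma EE_eq (c : ℤ) (z : ℝ) : EE c z = Complex.exp (Complex.I * z) ^ c := by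
  rw [← Complex.exp_int_mul]; unfold EE; congr 1; push_cast; ring

lemma intEE (c : ℤ) : ∫ z in (0:ℝ)..(2*Real.pi), EE c z
    = if c = 0 then ((2*Real.pi : ℝ) : ℂ) else 0 := by
  rcases eq_or_ne c 0 with rfl | hc
  · simp [EE]
  · rw [if_neg hc]
    have h1 : ∀ z : ℝ, EE c z = Complex.exp ((Complex.I * c) * z) := by
      intro z; unfold EE; ring_nf
    have hc' : (Complex.I * c) ≠ 0 :=
      mul_ne_zero Complex.I_ne_zero (by exact_mod_cast hc)
    simp only [h1]
    rw [integral_exp_mul_complex hc']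
    have h2 : Complex.exp (Complex.I * c * (2*(Real.pi:ℂ))) = 1 := by
      rw [show (Complex.I * (c:ℂ) * (2*(Real.pi:ℂ))) = c * (2 * (Real.pi:ℂ) * Complex.I) by
        push_cast; ring]
      exact Complex.exp_int_mul_two_pi_mul_I c
    simp [h2]

lemma innerCount (m : ℕ) (t : ℤ) :
    (∑ b ∈ Finset.range m, if t - (b:ℤ) = 0 then (1:ℤ) else 0)
      = if 0 ≤ t ∧ t < (m:ℤ) then 1 else 0 := by
  induction m with
  | zero => simp
  | succ m ih =>
      rw [Finset.sum_range_succ, ih]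
      push_cast
      split_ifs <;> omega

lemma doubleCount (k m : ℕ) (d : ℤ) :
    (∑ a ∈ Finset.range k, ∑ b ∈ Finset.range m,
        if (a:ℤ) - (b:ℤ) - d = 0 then (1:ℤ) else 0)
      = max 0 (min (k:ℤ) ((m:ℤ) + d) - max 0 d) := by
  have h1 : ∀ a : ℕ, (∑ b ∈ Finset.range m, if (a:ℤ) - (b:ℤ) - d = 0 then (1:ℤ) else 0)
      = if 0 ≤ (a:ℤ) - d ∧ (a:ℤ) - d < (m:ℤ) then 1 else 0 := by
    intro a
    rw [← innerCount m ((a:ℤ) - d)]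
    apply Finset.sum_congr rfl
    intro b _
    congr 1
    simp only [eq_iff_iff]
    omega
  simp only [h1]
  induction k with
  | zero => simp
  | succ k ih =>
      rw [Finset.sum_range_succ, ih]
      push_cast
      split_ifs <;> omega

lemma pointwise (k l m n : ℕ) (z : ℝ) (hz : Real.cos z ≠ 1) :
    ((1 : ℂ) - Complex.exp (Complex.I * (k : ℂ) * (z : ℂ)))
      * ((1 : ℂ) - Complex.exp (Complex.I * (l : ℂ) * (z : ℂ)))
      * ((1 : ℂ) - Complex.exp (-Complex.I * (m : ℂ) * (z : ℂ)))
      * ((1 : ℂ) - Complex.exp (-Complex.I * (n : ℂ) * (z : ℂ)))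
      / (((1 - Real.cos z : ℝ) : ℂ))
    = 2 * ∑ a ∈ Finset.range k, ∑ b ∈ Finset.range m,
        (EE ((a:ℤ) - b) z - EE ((a:ℤ) - b + l) z - EE ((a:ℤ) - b - n) z
          + EE ((a:ℤ) - b + l - n) z) := by
  set x : ℂ := Complex.exp (Complex.I * z) with hx
  have hx0 : x ≠ 0 := Complex.exp_ne_zero _
  have hxinv : x⁻¹ = Complex.exp (-(Complex.I * z)) := by
    rw [Complex.exp_neg]
  have hden : ((1 - Real.cos z : ℝ) : ℂ) = (1 - x) * (1 - x⁻¹) / 2 := by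
    push_cast
    rw [Complex.cos]
    rw [show (z:ℂ) * Complex.I = Complex.I * z by ring,
        show -(z:ℂ) * Complex.I = -(Complex.I * z) by ring, ← hx, ← hxinv]
    field_simp
    ring
  have hx1 : (1:ℂ) - x ≠ 0 := by
    intro hh
    have hxx : x = 1 := by linear_combination -hh
    apply hz
    have : ((1 - Real.cos z : ℝ) : ℂ) = 0 := by rw [hden, hxx]; simp
    have h0 : (1 - Real.cos z : ℝ) = 0 := by exact_mod_cast this
    linarith
  have hx1' : (1:ℂ) - x⁻¹ ≠ 0 := by
    intro hh
    apply hx1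
    have hxx : x⁻¹ = 1 := by linear_combination -hh
    have : x = 1 := by
      field_simp at hxx
      simp [hxx]
    rw [this]; ring
  -- numerator factor rewrites
  have ek : ∀ j : ℕ, Complex.exp (Complex.I * (j : ℂ) * z) = x ^ j := by
    intro j
    rw [hx, ← Complex.exp_nat_mul]
    congr 1; ring
  have em : ∀ j : ℕ, Complex.exp (-Complex.I * (j : ℂ) * z) = (x⁻¹) ^ j := by
    intro j
    rw [hxinv, ← Complex.exp_nat_mul]
    congr 1; ring
  have geo : ∀ (y : ℂ) (j : ℕ), (1:ℂ) - y ^ j = (1 - y) * ∑ a ∈ Finset.range j, y ^ a := by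
    intro y j
    linear_combination geom_sum_mul y j
  -- rewrite RHS terms
  have hterm : ∀ a b : ℕ,
      EE ((a:ℤ) - b) z - EE ((a:ℤ) - b + l) z - EE ((a:ℤ) - b - n) z
          + EE ((a:ℤ) - b + l - n) z
        = x ^ a * (x⁻¹) ^ b * ((1 - x ^ l) * (1 - (x⁻¹) ^ n)) := by
    intro a b
    simp only [EE_eq, ← hx]
    have hB : ∀ j : ℕ, (x⁻¹) ^ j = x ^ (-(j:ℤ)) := by
      intro j; rw [zpow_neg, zpow_natCast, inv_pow]
    have hA : ∀ j : ℕ, x ^ j = x ^ ((j:ℤ)) := by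
      intro j; rw [zpow_natCast]
    rw [show (a:ℤ) - b + l - n = (a:ℤ) + (l:ℤ) + (-(b:ℤ) + -(n:ℤ)) by ring,
        show (a:ℤ) - b + l = (a:ℤ) + (l:ℤ) + -(b:ℤ) by ring,
        show (a:ℤ) - b - n = (a:ℤ) + -(b:ℤ) + -(n:ℤ) by ring,
        show (a:ℤ) - b = (a:ℤ) + -(b:ℤ) by ring]
    rw [hA a, hA l, hB b, hB n]
    simp only [zpow_add₀ hx0]
    ring
  simp only [hterm]
  have hsum : ∑ a ∈ Finset.range k, ∑ b ∈ Finset.range m,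
      x ^ a * (x⁻¹) ^ b * ((1 - x ^ l) * (1 - (x⁻¹) ^ n))
      = (∑ a ∈ Finset.range k, x ^ a) * (∑ b ∈ Finset.range m, (x⁻¹) ^ b)
        * ((1 - x ^ l) * (1 - (x⁻¹) ^ n)) := by
    simp only [Finset.sum_mul, Finset.mul_sum]
    rw [Finset.sum_comm]
  rw [hsum, ek, ek, em, em, hden, geo x k, geo x⁻¹ m,
    div_eq_iff (div_ne_zero (mul_ne_zero hx1 hx1') two_ne_zero)]
  ring

noncomputable def GG (k l m n : ℕ) (z : ℝ) : ℂ :=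
  2 * ∑ a ∈ Finset.range k, ∑ b ∈ Finset.range m,
    (EE ((a:ℤ) - b) z - EE ((a:ℤ) - b + l) z - EE ((a:ℤ) - b - n) z
      + EE ((a:ℤ) - b + l - n) z)

lemma contGG (k l m n : ℕ) : Continuous (GG k l m n) := by
  unfold GG
  apply continuous_const.mul
  apply continuous_finset_sum
  intro a _
  apply continuous_finset_sum
  intro b _
  exact (((contEE _).sub (contEE _)).sub (contEE _)).add (contEE _)

lemma intGG (k l m n : ℕ) (h : k + l = m + n) :
    ∫ z in (0:ℝ)..(2*Real.pi), GG k l m n z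
      = ((2 * Real.pi *
        (((k : ℤ) + l + m + n - |(k : ℤ) - m| - |(k : ℤ) - n| - |(l : ℤ) - m|
          - |(l : ℤ) - n| : ℤ) : ℝ) : ℝ) : ℂ) := by
  have hInt1 : ∀ c : ℤ, IntervalIntegrable (EE c) MeasureTheory.volume 0 (2*Real.pi) :=
    fun c => (contEE c).intervalIntegrable _ _
  have hsplit : ∀ c1 c2 c3 c4 : ℤ,
      (∫ z in (0:ℝ)..(2*Real.pi), (EE c1 z - EE c2 z - EE c3 z + EE c4 z))
        = (if c1 = 0 then ((2*Real.pi:ℝ):ℂ) else 0)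
          - (if c2 = 0 then ((2*Real.pi:ℝ):ℂ) else 0)
          - (if c3 = 0 then ((2*Real.pi:ℝ):ℂ) else 0)
          + (if c4 = 0 then ((2*Real.pi:ℝ):ℂ) else 0) := by
    intro c1 c2 c3 c4
    rw [intervalIntegral.integral_add (((hInt1 c1).sub (hInt1 c2)).sub (hInt1 c3)) (hInt1 c4),
        intervalIntegral.integral_sub ((hInt1 c1).sub (hInt1 c2)) (hInt1 c3),
        intervalIntegral.integral_sub (hInt1 c1) (hInt1 c2),
        intEE, intEE, intEE, intEE]
  unfold GG
  rw [intervalIntegral.integral_const_mul]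
  rw [intervalIntegral.integral_finset_sum (fun a _ => by
    apply Continuous.intervalIntegrable
    apply continuous_finset_sum
    intro b _
    exact (((contEE _).sub (contEE _)).sub (contEE _)).add (contEE _))]
  have step2 : ∀ a : ℕ,
      (∫ z in (0:ℝ)..(2*Real.pi), ∑ b ∈ Finset.range m,
        (EE ((a:ℤ) - b) z - EE ((a:ℤ) - b + l) z - EE ((a:ℤ) - b - n) z
          + EE ((a:ℤ) - b + l - n) z))
      = ∑ b ∈ Finset.range m,
        ((if (a:ℤ) - b = 0 then ((2*Real.pi:ℝ):ℂ) else 0)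
          - (if (a:ℤ) - b + l = 0 then ((2*Real.pi:ℝ):ℂ) else 0)
          - (if (a:ℤ) - b - n = 0 then ((2*Real.pi:ℝ):ℂ) else 0)
          + (if (a:ℤ) - b + l - n = 0 then ((2*Real.pi:ℝ):ℂ) else 0)) := by
    intro a
    rw [intervalIntegral.integral_finset_sum (fun b _ => by
      exact ((((contEE _).sub (contEE _)).sub (contEE _)).add (contEE _)).intervalIntegrable _ _)]
    exact Finset.sum_congr rfl fun b _ => hsplit _ _ _ _
  simp only [step2]
  -- now convert to integer counting
  set S : ℤ := ∑ a ∈ Finset.range k, ∑ b ∈ Finset.range m,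
      ((if (a:ℤ) - b = 0 then (1:ℤ) else 0)
        - (if (a:ℤ) - b + l = 0 then (1:ℤ) else 0)
        - (if (a:ℤ) - b - n = 0 then (1:ℤ) else 0)
        + (if (a:ℤ) - b + l - n = 0 then (1:ℤ) else 0)) with hSdef
  have hA : ∑ a ∈ Finset.range k, ∑ b ∈ Finset.range m,
      ((if (a:ℤ) - b = 0 then ((2*Real.pi:ℝ):ℂ) else 0)
        - (if (a:ℤ) - b + l = 0 then ((2*Real.pi:ℝ):ℂ) else 0)
        - (if (a:ℤ) - b - n = 0 then ((2*Real.pi:ℝ):ℂ) else 0)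
        + (if (a:ℤ) - b + l - n = 0 then ((2*Real.pi:ℝ):ℂ) else 0))
      = ((2*Real.pi:ℝ):ℂ) * (S:ℂ) := by
    rw [hSdef]
    push_cast [apply_ite ((↑·) : ℤ → ℂ)]
    rw [Finset.mul_sum]
    apply Finset.sum_congr rfl; intro a _
    rw [Finset.mul_sum]
    apply Finset.sum_congr rfl; intro b _
    split_ifs <;> ring
  rw [hA]
  -- compute S
  have hS : (2:ℤ) * S = (k:ℤ) + l + m + n - |(k:ℤ) - m| - |(k:ℤ) - n| - |(l:ℤ) - m|
      - |(l:ℤ) - n| := by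
    have conv2 : (∑ a ∈ Finset.range k, ∑ b ∈ Finset.range m,
        if (a:ℤ) - b + l = 0 then (1:ℤ) else 0)
        = ∑ a ∈ Finset.range k, ∑ b ∈ Finset.range m,
          if (a:ℤ) - b - (-(l:ℤ)) = 0 then (1:ℤ) else 0 := by
      apply Finset.sum_congr rfl; intro a _
      apply Finset.sum_congr rfl; intro b _
      congr 1; simp only [eq_iff_iff]; omega
    have conv4 : (∑ a ∈ Finset.range k, ∑ b ∈ Finset.range m,
        if (a:ℤ) - b + l - n = 0 then (1:ℤ) else 0)
        = ∑ a ∈ Finset.range k, ∑ b ∈ Finset.range m,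
          if (a:ℤ) - b - ((n:ℤ) - l) = 0 then (1:ℤ) else 0 := by
      apply Finset.sum_congr rfl; intro a _
      apply Finset.sum_congr rfl; intro b _
      congr 1; simp only [eq_iff_iff]; omega
    have conv1 : (∑ a ∈ Finset.range k, ∑ b ∈ Finset.range m,
        if (a:ℤ) - b = 0 then (1:ℤ) else 0)
        = ∑ a ∈ Finset.range k, ∑ b ∈ Finset.range m,
          if (a:ℤ) - b - (0:ℤ) = 0 then (1:ℤ) else 0 := by
      apply Finset.sum_congr rfl; intro a _
      apply Finset.sum_congr rfl; intro b _
      congr 1; simp only [eq_iff_iff]; omega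
    have conv3 : (∑ a ∈ Finset.range k, ∑ b ∈ Finset.range m,
        if (a:ℤ) - b - n = 0 then (1:ℤ) else 0)
        = ∑ a ∈ Finset.range k, ∑ b ∈ Finset.range m,
          if (a:ℤ) - b - (n:ℤ) = 0 then (1:ℤ) else 0 := by
      rfl
    have hsplitS : S = (∑ a ∈ Finset.range k, ∑ b ∈ Finset.range m,
          if (a:ℤ) - b = 0 then (1:ℤ) else 0)
        - (∑ a ∈ Finset.range k, ∑ b ∈ Finset.range m,
          if (a:ℤ) - b + l = 0 then (1:ℤ) else 0)
        - (∑ a ∈ Finset.range k, ∑ b ∈ Finset.range m,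
          if (a:ℤ) - b - n = 0 then (1:ℤ) else 0)
        + (∑ a ∈ Finset.range k, ∑ b ∈ Finset.range m,
          if (a:ℤ) - b + l - n = 0 then (1:ℤ) else 0) := by
      rw [hSdef]
      simp only [Finset.sum_add_distrib, Finset.sum_sub_distrib]
    rw [hsplitS, conv1, conv2, conv3, conv4,
      doubleCount k m 0, doubleCount k m (-(l:ℤ)), doubleCount k m (n:ℤ),
      doubleCount k m ((n:ℤ) - l)]
    simp only [Int.abs_eq_natAbs]
    omega
  have : ((k:ℤ) + l + m + n - |(k:ℤ) - m| - |(k:ℤ) - n| - |(l:ℤ) - m| - |(l:ℤ) - n| : ℤ)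
      = 2 * S := hS.symm
  rw [this]
  push_cast
  ring

/-- The quartic interaction integral for the energy:
`lim_{ε→0⁺} ∫_ε^{2π-ε} (1-e^{ikz})(1-e^{iℓz})(1-e^{-imz})(1-e^{-inz})/(1-cos z) dz
  = 2π(k+ℓ+m+n - |k-m| - |k-n| - |ℓ-m| - |ℓ-n|)` when `k + ℓ = m + n`. -/
theorem stmt_4 (k l m n : ℕ) (h : k + l = m + n) :
    Filter.Tendsto
      (fun ε : ℝ => ∫ z in ε..(2 * Real.pi - ε),
        ((1 : ℂ) - Complex.exp (Complex.I * (k : ℂ) * (z : ℂ)))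
          * ((1 : ℂ) - Complex.exp (Complex.I * (l : ℂ) * (z : ℂ)))
          * ((1 : ℂ) - Complex.exp (-Complex.I * (m : ℂ) * (z : ℂ)))
          * ((1 : ℂ) - Complex.exp (-Complex.I * (n : ℂ) * (z : ℂ)))
          / (((1 - Real.cos z : ℝ) : ℂ)))
      (nhdsWithin 0 (Set.Ioi 0))
      (nhds ((2 * Real.pi *
        (((k : ℤ) + l + m + n - |(k : ℤ) - m| - |(k : ℤ) - n| - |(l : ℤ) - m| - |(l : ℤ) - n| : ℤ) : ℝ) : ℝ) : ℂ)) := by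
  have hIntG : ∀ a b : ℝ, IntervalIntegrable (GG k l m n) MeasureTheory.volume a b :=
    fun a b => (contGG k l m n).intervalIntegrable a b
  have hP : Continuous (fun t : ℝ => ∫ z in (0:ℝ)..t, GG k l m n z) :=
    intervalIntegral.continuous_primitive hIntG 0
  have h2π : Filter.Tendsto (fun ε : ℝ => 2*Real.pi - ε) (nhds 0) (nhds (2*Real.pi)) := by
    have : Continuous (fun ε : ℝ => 2*Real.pi - ε) := by continuity
    simpa using this.tendsto 0
  have keyG : Filter.Tendsto (fun ε : ℝ => ∫ z in ε..(2*Real.pi - ε), GG k l m n z)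
      (nhdsWithin 0 (Set.Ioi 0)) (nhds (∫ z in (0:ℝ)..(2*Real.pi), GG k l m n z)) := by
    have h1 : Filter.Tendsto
        (fun ε : ℝ => (∫ z in (0:ℝ)..(2*Real.pi - ε), GG k l m n z)
          - ∫ z in (0:ℝ)..ε, GG k l m n z)
        (nhds 0) (nhds (∫ z in (0:ℝ)..(2*Real.pi), GG k l m n z)) := by
      have t1 := (hP.tendsto (2*Real.pi)).comp h2π
      have t2 := hP.tendsto (0:ℝ)
      have := t1.sub t2
      simpa [intervalIntegral.integral_same] using this
    have h2 : ∀ ε : ℝ, (∫ z in (0:ℝ)..(2*Real.pi - ε), GG k l m n z)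
        - (∫ z in (0:ℝ)..ε, GG k l m n z) = ∫ z in ε..(2*Real.pi - ε), GG k l m n z :=
      fun ε => intervalIntegral.integral_interval_sub_left (hIntG 0 _) (hIntG 0 _)
    have h3 := h1.congr h2
    exact h3.mono_left nhdsWithin_le_nhds
  rw [← intGG k l m n h]
  apply keyG.congr'
  have hmem : Set.Ioo (0:ℝ) Real.pi ∈ nhdsWithin (0:ℝ) (Set.Ioi 0) :=
    Ioo_mem_nhdsGT Real.pi_pos
  filter_upwards [hmem] with ε hε
  apply intervalIntegral.integral_congr
  intro z hz
  have hεπ : ε < 2*Real.pi - ε := by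
    have := Real.pi_pos
    rcases hε with ⟨h1, h2⟩
    linarith
  rw [Set.uIcc_of_le hεπ.le] at hz
  rcases hz with ⟨hz1, hz2⟩
  have hcos : Real.cos z ≠ 1 := by
    have hzpos : 0 < z := lt_of_lt_of_le hε.1 hz1
    have hzlt : z < 2*Real.pi := by
      rcases hε with ⟨h1, _⟩
      linarith
    intro hc
    have := (Real.cos_eq_one_iff_of_lt_of_lt (by linarith [Real.pi_pos]) hzlt).mp hc
    linarith
  show GG k l m n z = _
  unfold GG
  exact (pointwise k l m n z hcos).symm
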